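/- The weighted path order >_WPO is transitive: if s >_WPO t and t >_WPO u then s >_WPO u; likewise the weak version ≥_WPO is transitive. -/

import Mathlib

/-- First-order terms over a signature `F` with arity function `ar`
and variables from `V`. -/
inductive Trm (F : Type) (ar : F → ℕ) (V : Type) : Type where
  | var : V → Trm F ar V
  | fn  : (f : F) → (Fin (ar f) → Trm F ar V) → Trm F ar V

variable {F V : Type} {ar : F → ℕ}

/-- Application of a substitution to a term. -/
def Trm.subst (θ : V → Trm F ar V) : Trm F ar V → Trm F ar V
  | .var x => θ x
  | .fn f ss => .fn f fun i => (ss i).subst θ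

/-- Strict part of a quasi-precedence. -/
def precGT (prec : F → F → Prop) (f g : F) : Prop := prec f g ∧ ¬ prec g f
/-- Equivalence part of a quasi-precedence. -/
def precEQ (prec : F → F → Prop) (f g : F) : Prop := prec f g ∧ prec g f

/-- Strict lexicographic extension of (GE, GT) to lists. -/
inductive LexGT {α : Type} (GE GT : α → α → Prop) : List α → List α → Prop
  | cons_nil {a l} : LexGT GE GT (a :: l) []
  | head {a b l m} : GT a b → LexGT GE GT (a :: l) (b :: m)
  | tail {a b l m} : GE a b → LexGT GE GT l m → LexGT GE GT (a :: l) (b :: m)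

/-- Weak lexicographic extension of (GE, GT) to lists. -/
inductive LexGE {α : Type} (GE GT : α → α → Prop) : List α → List α → Prop
  | nil {l} : LexGE GE GT l []
  | head {a b l m} : GT a b → LexGE GE GT (a :: l) (b :: m)
  | tail {a b l m} : GE a b → LexGE GE GT l m → LexGE GE GT (a :: l) (b :: m)

/-- The case analysis of the WPO definition, parameterized by the
lexicographic extension used (strict or weak). -/
def WPOCases (AGS AGT : Trm F ar V → Trm F ar V → Prop) (prec : F → F → Prop)
    (σ : ∀ f : F, List (Fin (ar f)))
    (GE GT : Trm F ar V → Trm F ar V → Prop)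
    (lex : List (Trm F ar V) → List (Trm F ar V) → Prop)
    (f : F) (ss : Fin (ar f) → Trm F ar V) (t : Trm F ar V) : Prop :=
  AGT (.fn f ss) t ∨
    (AGS (.fn f ss) t ∧
      ((∃ i ∈ σ f, GE (ss i) t) ∨
       (∃ g ts, t = Trm.fn g ts ∧ (∀ j ∈ σ g, GT (.fn f ss) (ts j)) ∧
         (precGT prec f g ∨ (precEQ prec f g ∧ lex ((σ f).map ss) ((σ g).map ts))))))

/-- The pair of relations (GE, GT) satisfies the defining equations of
the weighted path order, over term-level algebra orders AGS (weak) and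
AGT (strict), quasi-precedence `prec`, and (partial) status `σ`. -/
structure IsWPO (AGS AGT : Trm F ar V → Trm F ar V → Prop) (prec : F → F → Prop)
    (σ : ∀ f : F, List (Fin (ar f)))
    (GE GT : Trm F ar V → Trm F ar V → Prop) : Prop where
  ge_var : ∀ (x : V) (t : Trm F ar V), GE (.var x) t ↔ t = .var x
  gt_var : ∀ (x : V) (t : Trm F ar V), ¬ GT (.var x) t
  gt_fn : ∀ (f : F) (ss : Fin (ar f) → Trm F ar V) (t : Trm F ar V),
    GT (.fn f ss) t ↔ WPOCases AGS AGT prec σ GE GT (LexGT GE GT) f ss t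
  ge_fn : ∀ (f : F) (ss : Fin (ar f) → Trm F ar V) (t : Trm F ar V),
    GE (.fn f ss) t ↔ WPOCases AGS AGT prec σ GE GT (LexGE GE GT) f ss t

/-- A status is total iff each `σ f` is a permutation of all argument
positions of `f`. -/
def TotalStatus (σ : ∀ f : F, List (Fin (ar f))) : Prop :=
  ∀ f : F, (σ f).Perm (List.finRange (ar f))


section Aux

variable {F V : Type} {ar : F → ℕ}

/-- Size of a term, used as termination measure. -/
def trmSize : Trm F ar V → ℕ
  | .var _ => 1
  | .fn _ ss => 1 + ∑ i, trmSize (ss i)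

lemma trmSize_lt {f : F} (ss : Fin (ar f) → Trm F ar V) (i : Fin (ar f)) :
    trmSize (ss i) < trmSize (.fn f ss) := by
  have h1 : trmSize (ss i) ≤ ∑ j, trmSize (ss j) :=
    Finset.single_le_sum (f := fun j => trmSize (ss j)) (fun j _ => Nat.zero_le _) (Finset.mem_univ i)
  have h2 : trmSize (.fn f ss) = 1 + ∑ j, trmSize (ss j) := rfl
  omega

lemma lexGT_imp_lexGE {α : Type} {GE GT : α → α → Prop} {l m : List α}
    (h : LexGT GE GT l m) : LexGE GE GT l m := by
  induction h with
  | cons_nil => exact .nil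
  | head h => exact .head h
  | tail h _ ih => exact .tail h ih

/-- Combined pointwise transitivity hypothesis. -/
def PtTrans {α : Type} (GE GT : α → α → Prop) (l1 l2 l3 : List α) : Prop :=
  ∀ a ∈ l1, ∀ b ∈ l2, ∀ c ∈ l3,
    (GT a b → GT b c → GT a c) ∧ (GT a b → GE b c → GT a c) ∧
    (GE a b → GT b c → GT a c) ∧ (GE a b → GE b c → GE a c)

lemma ptTrans_tail {α : Type} {GE GT : α → α → Prop} {a b c : α} {l1 l2 l3 : List α}
    (H : PtTrans GE GT (a :: l1) (b :: l2) (c :: l3)) : PtTrans GE GT l1 l2 l3 :=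
  fun x hx y hy z hz =>
    H x (List.mem_cons_of_mem _ hx) y (List.mem_cons_of_mem _ hy) z (List.mem_cons_of_mem _ hz)

lemma lexGT_trans_lexGE {α : Type} {GE GT : α → α → Prop} :
    ∀ {l1 l2 : List α}, LexGT GE GT l1 l2 → ∀ {l3 : List α}, PtTrans GE GT l1 l2 l3 →
      LexGE GE GT l2 l3 → LexGT GE GT l1 l3 := by
  intro l1 l2 h12
  induction h12 with
  | cons_nil =>
    intro l3 H h23
    cases h23
    exact .cons_nil
  | @head a b l m hab =>
    intro l3 H h23
    cases h23 with
    | nil => exact .cons_nil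
    | head hbc =>
      exact .head ((H _ List.mem_cons_self _ List.mem_cons_self _
        List.mem_cons_self).1 hab hbc)
    | tail hbc _ =>
      exact .head ((H _ List.mem_cons_self _ List.mem_cons_self _
        List.mem_cons_self).2.1 hab hbc)
  | @tail a b l m hab h' ih =>
    intro l3 H h23
    cases h23 with
    | nil => exact .cons_nil
    | head hbc =>
      exact .head ((H _ List.mem_cons_self _ List.mem_cons_self _
        List.mem_cons_self).2.2.1 hab hbc)
    | tail hbc h23' =>
      exact .tail ((H _ List.mem_cons_self _ List.mem_cons_self _
        List.mem_cons_self).2.2.2 hab hbc) (ih (ptTrans_tail H) h23')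

lemma lexGE_trans_lexGT {α : Type} {GE GT : α → α → Prop} :
    ∀ {l1 l2 : List α}, LexGE GE GT l1 l2 → ∀ {l3 : List α}, PtTrans GE GT l1 l2 l3 →
      LexGT GE GT l2 l3 → LexGT GE GT l1 l3 := by
  intro l1 l2 h12
  induction h12 with
  | nil =>
    intro l3 H h23
    cases h23
  | @head a b l m hab =>
    intro l3 H h23
    cases h23 with
    | cons_nil => exact .cons_nil
    | head hbc =>
      exact .head ((H _ List.mem_cons_self _ List.mem_cons_self _
        List.mem_cons_self).1 hab hbc)
    | tail hbc _ =>
      exact .head ((H _ List.mem_cons_self _ List.mem_cons_self _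
        List.mem_cons_self).2.1 hab hbc)
  | @tail a b l m hab h' ih =>
    intro l3 H h23
    cases h23 with
    | cons_nil => exact .cons_nil
    | head hbc =>
      exact .head ((H _ List.mem_cons_self _ List.mem_cons_self _
        List.mem_cons_self).2.2.1 hab hbc)
    | tail hbc h23' =>
      exact .tail ((H _ List.mem_cons_self _ List.mem_cons_self _
        List.mem_cons_self).2.2.2 hab hbc) (ih (ptTrans_tail H) h23')

lemma lexGE_trans_lexGE {α : Type} {GE GT : α → α → Prop} :
    ∀ {l1 l2 : List α}, LexGE GE GT l1 l2 → ∀ {l3 : List α}, PtTrans GE GT l1 l2 l3 →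
      LexGE GE GT l2 l3 → LexGE GE GT l1 l3 := by
  intro l1 l2 h12
  induction h12 with
  | nil =>
    intro l3 H h23
    cases h23
    exact .nil
  | @head a b l m hab =>
    intro l3 H h23
    cases h23 with
    | nil => exact .nil
    | head hbc =>
      exact .head ((H _ List.mem_cons_self _ List.mem_cons_self _
        List.mem_cons_self).1 hab hbc)
    | tail hbc _ =>
      exact .head ((H _ List.mem_cons_self _ List.mem_cons_self _
        List.mem_cons_self).2.1 hab hbc)
  | @tail a b l m hab h' ih =>
    intro l3 H h23
    cases h23 with
    | nil => exact .nil
    | head hbc =>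
      exact .head ((H _ List.mem_cons_self _ List.mem_cons_self _
        List.mem_cons_self).2.2.1 hab hbc)
    | tail hbc h23' =>
      exact .tail ((H _ List.mem_cons_self _ List.mem_cons_self _
        List.mem_cons_self).2.2.2 hab hbc) (ih (ptTrans_tail H) h23')

lemma precGT_trans' {prec : F → F → Prop} (htr : Transitive prec) {f g h : F} :
    precGT prec f g → precGT prec g h → precGT prec f h :=
  fun ⟨h1, h2⟩ ⟨h3, _⟩ => ⟨htr h1 h3, fun hh => h2 (htr h3 hh)⟩

lemma precGT_precEQ {prec : F → F → Prop} (htr : Transitive prec) {f g h : F} :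
    precGT prec f g → precEQ prec g h → precGT prec f h :=
  fun ⟨h1, h2⟩ ⟨h3, h4⟩ => ⟨htr h1 h3, fun hh => h2 (htr h3 hh)⟩

lemma precEQ_precGT {prec : F → F → Prop} (htr : Transitive prec) {f g h : F} :
    precEQ prec f g → precGT prec g h → precGT prec f h :=
  fun ⟨h1, h2⟩ ⟨h3, h4⟩ => ⟨htr h1 h3, fun hh => h4 (htr hh h1)⟩

lemma precEQ_trans' {prec : F → F → Prop} (htr : Transitive prec) {f g h : F} :
    precEQ prec f g → precEQ prec g h → precEQ prec f h :=
  fun ⟨h1, h2⟩ ⟨h3, h4⟩ => ⟨htr h1 h3, htr h4 h2⟩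

end Aux

/-- The weighted path order is transitive: both the strict version
`>_WPO` and the weak version `≥_WPO` are transitive. -/
theorem wpo_transitive
    {F V : Type} {ar : F → ℕ}
    (AGS AGT : Trm F ar V → Trm F ar V → Prop) (prec : F → F → Prop)
    (σ : ∀ f : F, List (Fin (ar f)))
    (GE GT : Trm F ar V → Trm F ar V → Prop)
    (hW : IsWPO AGS AGT prec σ GE GT)
    (htot : TotalStatus σ)
    (hprec_refl : Reflexive prec) (hprec_trans : Transitive prec)
    (hAGS_refl : Reflexive AGS)
    (hAGS_trans : Transitive AGS) (hAGT_trans : Transitive AGT)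
    (hcompat1 : ∀ s t u, AGS s t → AGT t u → AGT s u)
    (hcompat2 : ∀ s t u, AGT s t → AGS t u → AGT s u)
    (hAGT_AGS : ∀ s t, AGT s t → AGS s t)
    (hsimple : ∀ (f : F) (ss : Fin (ar f) → Trm F ar V) (i : Fin (ar f)),
        i ∈ σ f → AGS (.fn f ss) (ss i)) :
    Transitive GT ∧ Transitive GE := by
  
  classical
  -- GT implies GE
  have gt_ge : ∀ s t : Trm F ar V, GT s t → GE s t := by
    intro s t h
    cases s with
    | var x => exact absurd h (hW.gt_var x t)
    | fn f ss =>
      rw [hW.gt_fn] at h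
      rw [hW.ge_fn]
      rcases h with h | ⟨h1, h2⟩
      · exact Or.inl h
      · refine Or.inr ⟨h1, ?_⟩
        rcases h2 with h2 | ⟨g, ts, rfl, h3, h4⟩
        · exact Or.inl h2
        · exact Or.inr ⟨g, ts, rfl, h3,
            h4.imp id (fun ⟨he, hl⟩ => ⟨he, lexGT_imp_lexGE hl⟩)⟩
  -- GE implies AGS
  have ge_ags : ∀ s t : Trm F ar V, GE s t → AGS s t := by
    intro s t h
    cases s with
    | var x =>
      rw [hW.ge_var] at h
      subst h
      exact hAGS_refl _
    | fn f ss =>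
      rw [hW.ge_fn] at h
      rcases h with h | ⟨h, _⟩
      · exact hAGT_AGS _ _ h
      · exact h
  have size_mem : ∀ {f : F} (ss : Fin (ar f) → Trm F ar V) {a : Trm F ar V},
      a ∈ (σ f).map ss → trmSize a < trmSize (Trm.fn f ss) := by
    intro f ss a ha
    rcases List.mem_map.1 ha with ⟨i, _, rfl⟩
    exact trmSize_lt ss i
  have main : ∀ N : ℕ, ∀ s t u : Trm F ar V,
      trmSize s + trmSize t + trmSize u ≤ N →
      ((GT s t → GE t u → GT s u) ∧ (GE s t → GT t u → GT s u) ∧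
        (GE s t → GE t u → GE s u)) := by
    intro N
    induction N with
    | zero =>
      intro s t u hsz
      have h1 : 0 < trmSize s := by cases s <;> simp [trmSize]
      omega
    | succ N IH =>
      intro s t u hsize
      -- helper to build PtTrans from IH
      have mkPt : ∀ {f : F} (ss : Fin (ar f) → Trm F ar V)
          {g : F} (ts : Fin (ar g) → Trm F ar V)
          {h : F} (us : Fin (ar h) → Trm F ar V),
          trmSize (Trm.fn f ss) + trmSize (Trm.fn g ts) + trmSize (Trm.fn h us) ≤ N + 1 →
          PtTrans GE GT ((σ f).map ss) ((σ g).map ts) ((σ h).map us) := by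
        intro f ss g ts h us hsz a ha b hb c hc
        have h1 := size_mem ss ha
        have h2 := size_mem ts hb
        have h3 := size_mem us hc
        obtain ⟨A1, A2, A3⟩ := IH a b c (by omega)
        exact ⟨fun x y => A1 x (gt_ge _ _ y), A1, A2, A3⟩
      refine ⟨?_, ?_, ?_⟩
      · -- GT s t → GE t u → GT s u
        intro h1 h2
        cases s with
        | var x => exact absurd h1 (hW.gt_var x t)
        | fn f ss =>
          have h1s := h1
          have hAGStu := ge_ags t u h2
          rw [hW.gt_fn] at h1
          rcases h1 with hAGT | ⟨hAGSst, hrest⟩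
          · exact (hW.gt_fn f ss u).mpr (Or.inl (hcompat2 _ _ _ hAGT hAGStu))
          · have hAGSsu := hAGS_trans hAGSst hAGStu
            rcases hrest with ⟨i, hi, hge⟩ | ⟨g, ts, rfl, hargs, hp⟩
            · have hsz : trmSize (ss i) + trmSize t + trmSize u ≤ N := by
                have := trmSize_lt ss i; omega
              exact (hW.gt_fn f ss u).mpr
                (Or.inr ⟨hAGSsu, Or.inl ⟨i, hi, (IH _ _ _ hsz).2.2 hge h2⟩⟩)
            · rw [hW.ge_fn] at h2
              rcases h2 with hAGTtu | ⟨_, hrest2⟩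
              · exact (hW.gt_fn f ss u).mpr (Or.inl (hcompat1 _ _ _ hAGSst hAGTtu))
              · rcases hrest2 with ⟨j, hj, hgeju⟩ | ⟨h, us, rfl, hargs2, hp2⟩
                · have hsz : trmSize (Trm.fn f ss) + trmSize (ts j) + trmSize u ≤ N := by
                    have := trmSize_lt ts j; omega
                  exact (IH _ _ _ hsz).1 (hargs j hj) hgeju
                · refine (hW.gt_fn f ss (.fn h us)).mpr
                    (Or.inr ⟨hAGSsu, Or.inr ⟨h, us, rfl, ?_, ?_⟩⟩)
                  · intro k hk
                    have hsz : trmSize (Trm.fn f ss) + trmSize (Trm.fn g ts)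
                        + trmSize (us k) ≤ N := by
                      have := trmSize_lt us k; omega
                    exact (IH _ _ _ hsz).1 h1s (gt_ge _ _ (hargs2 k hk))
                  · rcases hp with hp | ⟨hp, hl⟩ <;> rcases hp2 with hp2 | ⟨hp2, hl2⟩
                    · exact Or.inl (precGT_trans' hprec_trans hp hp2)
                    · exact Or.inl (precGT_precEQ hprec_trans hp hp2)
                    · exact Or.inl (precEQ_precGT hprec_trans hp hp2)
                    · exact Or.inr ⟨precEQ_trans' hprec_trans hp hp2,
                        lexGT_trans_lexGE hl (mkPt ss ts us hsize) hl2⟩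
      · -- GE s t → GT t u → GT s u
        intro h1 h2
        cases s with
        | var x =>
          rw [hW.ge_var] at h1
          subst h1
          exact h2
        | fn f ss =>
          have h1s := h1
          have hAGStu := ge_ags t u (gt_ge _ _ h2)
          rw [hW.ge_fn] at h1
          rcases h1 with hAGT | ⟨hAGSst, hrest⟩
          · exact (hW.gt_fn f ss u).mpr (Or.inl (hcompat2 _ _ _ hAGT hAGStu))
          · have hAGSsu := hAGS_trans hAGSst hAGStu
            rcases hrest with ⟨i, hi, hge⟩ | ⟨g, ts, rfl, hargs, hp⟩
            · have hsz : trmSize (ss i) + trmSize t + trmSize u ≤ N := by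
                have := trmSize_lt ss i; omega
              exact (hW.gt_fn f ss u).mpr
                (Or.inr ⟨hAGSsu, Or.inl ⟨i, hi, gt_ge _ _ ((IH _ _ _ hsz).2.1 hge h2)⟩⟩)
            · rw [hW.gt_fn] at h2
              rcases h2 with hAGTtu | ⟨_, hrest2⟩
              · exact (hW.gt_fn f ss u).mpr (Or.inl (hcompat1 _ _ _ hAGSst hAGTtu))
              · rcases hrest2 with ⟨j, hj, hgeju⟩ | ⟨h, us, rfl, hargs2, hp2⟩
                · have hsz : trmSize (Trm.fn f ss) + trmSize (ts j) + trmSize u ≤ N := by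
                    have := trmSize_lt ts j; omega
                  exact (IH _ _ _ hsz).1 (hargs j hj) hgeju
                · refine (hW.gt_fn f ss (.fn h us)).mpr
                    (Or.inr ⟨hAGSsu, Or.inr ⟨h, us, rfl, ?_, ?_⟩⟩)
                  · intro k hk
                    have hsz : trmSize (Trm.fn f ss) + trmSize (Trm.fn g ts)
                        + trmSize (us k) ≤ N := by
                      have := trmSize_lt us k; omega
                    exact (IH _ _ _ hsz).2.1 h1s (hargs2 k hk)
                  · rcases hp with hp | ⟨hp, hl⟩ <;> rcases hp2 with hp2 | ⟨hp2, hl2⟩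
                    · exact Or.inl (precGT_trans' hprec_trans hp hp2)
                    · exact Or.inl (precGT_precEQ hprec_trans hp hp2)
                    · exact Or.inl (precEQ_precGT hprec_trans hp hp2)
                    · exact Or.inr ⟨precEQ_trans' hprec_trans hp hp2,
                        lexGE_trans_lexGT hl (mkPt ss ts us hsize) hl2⟩
      · -- GE s t → GE t u → GE s u
        intro h1 h2
        cases s with
        | var x =>
          rw [hW.ge_var] at h1
          subst h1
          exact h2
        | fn f ss =>
          have h1s := h1
          have hAGStu := ge_ags t u h2
          rw [hW.ge_fn] at h1
          rcases h1 with hAGT | ⟨hAGSst, hrest⟩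
          · exact (hW.ge_fn f ss u).mpr (Or.inl (hcompat2 _ _ _ hAGT hAGStu))
          · have hAGSsu := hAGS_trans hAGSst hAGStu
            rcases hrest with ⟨i, hi, hge⟩ | ⟨g, ts, rfl, hargs, hp⟩
            · have hsz : trmSize (ss i) + trmSize t + trmSize u ≤ N := by
                have := trmSize_lt ss i; omega
              exact (hW.ge_fn f ss u).mpr
                (Or.inr ⟨hAGSsu, Or.inl ⟨i, hi, (IH _ _ _ hsz).2.2 hge h2⟩⟩)
            · rw [hW.ge_fn] at h2
              rcases h2 with hAGTtu | ⟨_, hrest2⟩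
              · exact (hW.ge_fn f ss u).mpr (Or.inl (hcompat1 _ _ _ hAGSst hAGTtu))
              · rcases hrest2 with ⟨j, hj, hgeju⟩ | ⟨h, us, rfl, hargs2, hp2⟩
                · have hsz : trmSize (Trm.fn f ss) + trmSize (ts j) + trmSize u ≤ N := by
                    have := trmSize_lt ts j; omega
                  exact gt_ge _ _ ((IH _ _ _ hsz).1 (hargs j hj) hgeju)
                · refine (hW.ge_fn f ss (.fn h us)).mpr
                    (Or.inr ⟨hAGSsu, Or.inr ⟨h, us, rfl, ?_, ?_⟩⟩)
                  · intro k hk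
                    have hsz : trmSize (Trm.fn f ss) + trmSize (Trm.fn g ts)
                        + trmSize (us k) ≤ N := by
                      have := trmSize_lt us k; omega
                    exact (IH _ _ _ hsz).2.1 h1s (hargs2 k hk)
                  · rcases hp with hp | ⟨hp, hl⟩ <;> rcases hp2 with hp2 | ⟨hp2, hl2⟩
                    · exact Or.inl (precGT_trans' hprec_trans hp hp2)
                    · exact Or.inl (precGT_precEQ hprec_trans hp hp2)
                    · exact Or.inl (precEQ_precGT hprec_trans hp hp2)
                    · exact Or.inr ⟨precEQ_trans' hprec_trans hp hp2,
                        lexGE_trans_lexGE hl (mkPt ss ts us hsize) hl2⟩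
  constructor
  · intro s t u h1 h2
    exact (main _ s t u le_rfl).1 h1 (gt_ge _ _ h2)
  · intro s t u h1 h2
    exact (main _ s t u le_rfl).2.2 h1 h2
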